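/- Let c be a child sequence of length n with a = (sum_i c_i^2)/n, C a uniformly random rearrangement of c, and S_i = sum_{j≤i}(C_j - 1). Then for all t ≥ 0, P(min_{0 ≤ i ≤ ⌊n/2⌋} S_i ≤ -(t+1)) ≤ exp(-t^2 / (8(3+2a)n + 8t/3)). -/

import Mathlib

/-- Partial sum `S_k = ∑_{i=1}^k (c_i - 1)` of a length-`n` sequence (0-indexed). -/
def pS {n : ℕ} (c : Fin n → ℕ) (k : ℕ) : ℤ :=
  ∑ i : Fin n, if (i : ℕ) < k then (c i : ℤ) - 1 else 0

/-- Cyclic shift of a sequence by `j`. -/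
def cshift {n : ℕ} (j : Fin n) (c : Fin n → ℕ) : Fin n → ℕ := fun i => c (i + j)

/-- A tree sequence: partial sums are nonnegative before index `n`
(equivalently, the queue `S_i + 1` stays strictly positive for `i < n`). -/
def IsTreeSeq {n : ℕ} (c : Fin n → ℕ) : Prop := ∀ k < n, 0 ≤ pS c k


set_option maxHeartbeats 1000000

open Finset

lemma pS_zero {n : ℕ} (c : Fin n → ℕ) : pS c 0 = 0 := by
  simp [pS]

lemma pS_congr {n : ℕ} {c c' : Fin n → ℕ} {k : ℕ}
    (h : ∀ x : Fin n, (x : ℕ) < k → c' x = c x) : pS c' k = pS c k := by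
  unfold pS
  refine Finset.sum_congr rfl fun x _ => ?_
  by_cases hx : (x : ℕ) < k
  · simp [hx, h x hx]
  · simp [hx]

lemma pS_succ {n : ℕ} (c : Fin n → ℕ) (i : ℕ) (hi : i < n) :
    pS c (i + 1) = pS c i + ((c ⟨i, hi⟩ : ℤ) - 1) := by
  have key : pS c (i + 1) = pS c i + ∑ x : Fin n, (if x = ⟨i, hi⟩ then (c x : ℤ) - 1 else 0) := by
    unfold pS
    rw [← Finset.sum_add_distrib]
    refine Finset.sum_congr rfl fun x _ => ?_
    by_cases h1 : (x : ℕ) < i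
    · have h2 : (x : ℕ) < i + 1 := by omega
      have h3 : x ≠ ⟨i, hi⟩ := by
        intro h; apply absurd h1; simp [h]
      simp [h1, h2, h3]
    · by_cases h2 : (x : ℕ) < i + 1
      · have h3 : x = ⟨i, hi⟩ := by
          apply Fin.ext; simp; omega
        simp [h1, h2, h3]
      · have h3 : x ≠ ⟨i, hi⟩ := by
          intro h; apply absurd h2; simp [h]
        simp [h1, h2, h3]
  rw [key, Finset.sum_ite_eq' Finset.univ ⟨i, hi⟩ (fun x => (c x : ℤ) - 1)]
  simp

lemma card_filter_lt {n k : ℕ} (hk : k ≤ n) :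
    (Finset.univ.filter (fun x : Fin n => (x : ℕ) < k)).card = k := by
  have : (Finset.univ.filter (fun x : Fin n => (x : ℕ) < k)) =
      (Finset.range k).attachFin (fun m hm => lt_of_lt_of_le (Finset.mem_range.mp hm) hk) := by
    ext x
    simp [Finset.mem_attachFin]
  rw [this, Finset.card_attachFin, Finset.card_range]

lemma pS_eq_sum_sub {n : ℕ} (c : Fin n → ℕ) (k : ℕ) (hk : k ≤ n) :
    (pS c k : ℤ) = (∑ x : Fin n, if (x : ℕ) < k then (c x : ℤ) else 0) - k := by
  unfold pS
  have : ∀ x : Fin n, (if (x : ℕ) < k then (c x : ℤ) - 1 else 0)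
      = (if (x : ℕ) < k then (c x : ℤ) else 0) - (if (x : ℕ) < k then (1:ℤ) else 0) := by
    intro x; by_cases hx : (x : ℕ) < k <;> simp [hx]
  rw [Finset.sum_congr rfl (fun x _ => this x), Finset.sum_sub_distrib]
  congr 1
  rw [Finset.sum_ite, Finset.sum_const, Finset.sum_const]
  simp [card_filter_lt hk]

lemma neg_le_pS {n : ℕ} (c : Fin n → ℕ) (k : ℕ) (hk : k ≤ n) : -(k : ℤ) ≤ pS c k := by
  rw [pS_eq_sum_sub c k hk]
  have h0 : (0:ℤ) ≤ ∑ x : Fin n, if (x : ℕ) < k then (c x : ℤ) else 0 := by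
    apply Finset.sum_nonneg; intro x _; positivity
  omega

open Classical in
noncomputable def stI (P : ℕ → Prop) (i : ℕ) : ℕ :=
  if h : ∃ j, j ≤ i ∧ P j then Nat.find h else i

open Classical

lemma stI_le (P : ℕ → Prop) (i : ℕ) : stI P i ≤ i := by
  unfold stI
  split
  · next h => exact (Nat.find_spec h).1
  · exact le_refl i

lemma stI_zero (P : ℕ → Prop) : stI P 0 = 0 :=
  Nat.le_zero.mp (stI_le P 0)

lemma stI_of_not_exists {P : ℕ → Prop} {i : ℕ} (h : ¬ ∃ j, j ≤ i ∧ P j) : stI P i = i :=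
  dif_neg h

lemma stI_spec {P : ℕ → Prop} {i : ℕ} (h : ∃ j, j ≤ i ∧ P j) : P (stI P i) := by
  unfold stI
  rw [dif_pos h]
  exact (Nat.find_spec h).2

lemma stI_min {P : ℕ → Prop} {i : ℕ} (h : ∃ j, j ≤ i ∧ P j) {j : ℕ} (hj : j ≤ i) (hPj : P j) :
    stI P i ≤ j := by
  unfold stI
  rw [dif_pos h]
  exact Nat.find_min' h ⟨hj, hPj⟩

lemma stI_succ_of_exists {P : ℕ → Prop} {i : ℕ} (h : ∃ j, j ≤ i ∧ P j) :
    stI P (i + 1) = stI P i := by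
  obtain ⟨j0, hj0, hP0⟩ := h
  have h' : ∃ j, j ≤ i + 1 ∧ P j := ⟨j0, by omega, hP0⟩
  have h1 : stI P (i+1) ≤ stI P i :=
    stI_min h' (by have := stI_le P i; omega) (stI_spec ⟨j0, hj0, hP0⟩)
  have h2 : stI P i ≤ stI P (i+1) := by
    apply stI_min ⟨j0, hj0, hP0⟩
    · have h3 : stI P (i+1) ≤ j0 := stI_min h' (by omega) hP0
      omega
    · exact stI_spec h'
  omega

lemma stI_succ_of_not_exists {P : ℕ → Prop} {i : ℕ} (h : ¬ ∃ j, j ≤ i ∧ P j) :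
    stI P (i + 1) = i + 1 := by
  by_cases h' : ∃ j, j ≤ i + 1 ∧ P j
  · have h1 : stI P (i+1) ≤ i + 1 := stI_le P (i+1)
    have h2 : ¬ (stI P (i+1) ≤ i) := by
      intro hle
      exact h ⟨stI P (i+1), hle, stI_spec h'⟩
    omega
  · exact stI_of_not_exists h'

lemma stI_congr {P Q : ℕ → Prop} {i : ℕ} (h : ∀ j ≤ i, (P j ↔ Q j)) :
    stI P i = stI Q i := by
  by_cases hP : ∃ j, j ≤ i ∧ P j
  · have hQ : ∃ j, j ≤ i ∧ Q j := by
      obtain ⟨j, hj, hPj⟩ := hP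
      exact ⟨j, hj, (h j hj).mp hPj⟩
    have h1 : stI P i ≤ stI Q i :=
      stI_min hP (stI_le Q i) ((h _ (stI_le Q i)).mpr (stI_spec hQ))
    have h2 : stI Q i ≤ stI P i :=
      stI_min hQ (stI_le P i) ((h _ (stI_le P i)).mp (stI_spec hP))
    omega
  · have hQ : ¬ ∃ j, j ≤ i ∧ Q j := by
      intro ⟨j, hj, hQj⟩
      exact hP ⟨j, hj, (h j hj).mpr hQj⟩
    rw [stI_of_not_exists hP, stI_of_not_exists hQ]

open Finset

/-- `e^y ≤ 1 + y + y²` for `y ≤ 1`. -/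
lemma exp_quad {y : ℝ} (hy : y ≤ 1) : Real.exp y ≤ 1 + y + y ^ 2 := by
  rcases le_or_gt y (-1) with h | h
  · have h1 : Real.exp y ≤ 1 := by
      apply le_of_lt
      rw [Real.exp_lt_one_iff]
      linarith
    nlinarith
  · have hy1 : |y| ≤ 1 := by
      rw [abs_le]; constructor <;> linarith
    have hb := Real.exp_bound hy1 (by norm_num : 0 < 3)
    norm_num [Nat.factorial] at hb
    have hsum : ∑ i ∈ Finset.range 3, y ^ i / (Nat.factorial i : ℝ) = 1 + y + y ^ 2 / 2 := by
      simp [Finset.sum_range_succ, Nat.factorial]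
    rw [hsum] at hb
    have h2 : Real.exp y - (1 + y + y ^ 2 / 2) ≤ |y| ^ 3 * (2/9) := by
      calc Real.exp y - (1 + y + y ^ 2 / 2) ≤ |Real.exp y - (1 + y + y ^ 2 / 2)| := le_abs_self _
        _ ≤ _ := by convert hb using 2 <;> norm_num
    have h3 : |y| ^ 3 ≤ y ^ 2 := by
      have heq : |y| ^ 3 = |y| * |y| ^ 2 := by ring
      rw [heq, sq_abs]
      nlinarith [abs_nonneg y, sq_nonneg y]
    nlinarith [sq_nonneg y]

/-- Bernstein-type single-step bound. -/
lemma bern_sum {α : Type*} {K : Finset α} {X : α → ℝ} {lam B beta : ℝ}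
    (h0 : ∑ k ∈ K, X k = 0) (hb : ∀ k ∈ K, lam * X k ≤ 1)
    (h2 : ∑ k ∈ K, (X k) ^ 2 ≤ B) (hB : B ≤ (K.card : ℝ) * beta) (hbeta : 0 ≤ beta) :
    ∑ k ∈ K, Real.exp (lam * X k) ≤ (K.card : ℝ) * Real.exp (lam ^ 2 * beta) := by
  have step1 : ∑ k ∈ K, Real.exp (lam * X k) ≤ ∑ k ∈ K, (1 + lam * X k + (lam * X k) ^ 2) :=
    Finset.sum_le_sum fun k hk => exp_quad (hb k hk)
  have step2 : ∑ k ∈ K, (1 + lam * X k + (lam * X k) ^ 2)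
      = (K.card : ℝ) + lam * (∑ k ∈ K, X k) + lam ^ 2 * (∑ k ∈ K, (X k) ^ 2) := by
    rw [Finset.sum_add_distrib, Finset.sum_add_distrib, Finset.sum_const, Finset.mul_sum,
      Finset.mul_sum]
    congr 1
    · congr 1
      simp
    · exact Finset.sum_congr rfl fun k _ => by ring
  have step3 : (K.card : ℝ) + lam * (∑ k ∈ K, X k) + lam ^ 2 * (∑ k ∈ K, (X k) ^ 2)
      ≤ (K.card : ℝ) * (1 + lam ^ 2 * beta) := by
    rw [h0]
    have : lam ^ 2 * (∑ k ∈ K, (X k) ^ 2) ≤ lam ^ 2 * B :=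
      mul_le_mul_of_nonneg_left h2 (sq_nonneg lam)
    have h4 : lam ^ 2 * B ≤ lam ^ 2 * ((K.card : ℝ) * beta) :=
      mul_le_mul_of_nonneg_left hB (sq_nonneg lam)
    ring_nf
    nlinarith
  have step4 : (K.card : ℝ) * (1 + lam ^ 2 * beta) ≤ (K.card : ℝ) * Real.exp (lam ^ 2 * beta) := by
    apply mul_le_mul_of_nonneg_left _ (Nat.cast_nonneg _)
    have := Real.add_one_le_exp (lam ^ 2 * beta)
    linarith
  linarith

noncomputable def Mrt {n : ℕ} (c : Fin n → ℕ) (τ : Equiv.Perm (Fin n)) (i : ℕ) : ℝ :=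
  ((pS (c ∘ ⇑τ) i : ℝ) + 1) / ((n : ℝ) - i)

noncomputable def Zf {n : ℕ} (c : Fin n → ℕ) (lam beta : ℝ) (τ : Equiv.Perm (Fin n)) (i : ℕ) : ℝ :=
  Real.exp (-(lam * Mrt c τ i) - lam ^ 2 * beta * i)

noncomputable def Yf {n : ℕ} (c : Fin n → ℕ) (lam beta t : ℝ) (τ : Equiv.Perm (Fin n)) (i : ℕ) : ℝ :=
  Zf c lam beta τ (stI (fun j => Mrt c τ j ≤ -t / (n : ℝ)) i)

lemma Zf_pos {n : ℕ} (c : Fin n → ℕ) (lam beta : ℝ) (τ : Equiv.Perm (Fin n)) (i : ℕ) :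
    0 < Zf c lam beta τ i := Real.exp_pos _

lemma Yf_pos {n : ℕ} (c : Fin n → ℕ) (lam beta t : ℝ) (τ : Equiv.Perm (Fin n)) (i : ℕ) :
    0 < Yf c lam beta t τ i := Real.exp_pos _

lemma Mrt_prefix {n : ℕ} (c : Fin n → ℕ) {σ τ : Equiv.Perm (Fin n)} {j : ℕ}
    (h : ∀ x : Fin n, (x : ℕ) < j → σ x = τ x) : Mrt c σ j = Mrt c τ j := by
  unfold Mrt
  rw [pS_congr (c := c ∘ ⇑τ) (c' := c ∘ ⇑σ) (fun x hx => by simp [h x hx])]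

lemma card_filter_not_lt {n i : ℕ} (hin : i ≤ n) :
    (Finset.univ.filter (fun k : Fin n => ¬((k : ℕ) < i))).card = n - i := by
  have h := Finset.card_filter_add_card_filter_not
    (s := (Finset.univ : Finset (Fin n))) (p := fun k : Fin n => (k : ℕ) < i)
  rw [card_filter_lt hin] at h
  simp only [Finset.card_univ, Fintype.card_fin] at h
  omega

lemma pS_real {n : ℕ} (c' : Fin n → ℕ) (k : ℕ) (hk : k ≤ n) :
    (pS c' k : ℝ) = (∑ x : Fin n, if (x : ℕ) < k then (c' x : ℝ) else 0) - k := by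
  have h := pS_eq_sum_sub c' k hk
  have h2 : ((pS c' k : ℤ) : ℝ)
      = (((∑ x : Fin n, if (x : ℕ) < k then (c' x : ℤ) else 0) - (k : ℤ) : ℤ) : ℝ) := by
    exact_mod_cast congrArg (fun z : ℤ => (z : ℝ)) h
  rw [h2]
  push_cast
  rfl

lemma step_pointwise {n : ℕ} (c : Fin n → ℕ) (hc : ∑ x, c x = n - 1)
    {t lam Qr : ℝ} (ht : 0 ≤ t) (hlam : 0 ≤ lam)
    (hQr : Qr = ∑ x : Fin n, ((c x : ℝ)) ^ 2) (hQpos : 0 < Qr)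
    (hlam4 : lam * (4 / (n : ℝ)) ≤ 1)
    {i : ℕ} (hi2 : i < n / 2) (hin : i < n) (τ : Equiv.Perm (Fin n)) :
    ∑ k ∈ Finset.univ.filter (fun k : Fin n => ¬((k : ℕ) < i)),
        Yf c lam (8 * Qr / (n : ℝ) ^ 3) t (τ * Equiv.swap ⟨i, hin⟩ k) (i + 1)
      ≤ (((Finset.univ.filter (fun k : Fin n => ¬((k : ℕ) < i))).card : ℝ))
          * Yf c lam (8 * Qr / (n : ℝ) ^ 3) t τ i := by
  classical
  have hn2 : 2 ≤ n := by omega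
  have hN2 : (2 : ℝ) ≤ (n : ℝ) := by exact_mod_cast hn2
  have hIhalf : (i : ℝ) + 1 ≤ (n : ℝ) / 2 := by
    have h1 : (i : ℕ) + 1 ≤ n / 2 := hi2
    have h2 : ((n / 2 : ℕ) : ℝ) ≤ (n : ℝ) / 2 := Nat.cast_div_le
    calc ((i : ℝ) + 1) = ((i + 1 : ℕ) : ℝ) := by push_cast; ring
      _ ≤ ((n / 2 : ℕ) : ℝ) := by exact_mod_cast h1
      _ ≤ (n : ℝ) / 2 := h2
  have hD1 : (n : ℝ) / 2 ≤ (n : ℝ) - (i : ℝ) - 1 := by linarith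
  have hD1pos : 0 < (n : ℝ) - (i : ℝ) - 1 := by linarith
  have hNIpos : 0 < (n : ℝ) - (i : ℝ) := by linarith
  have hcardK : (((Finset.univ.filter (fun k : Fin n => ¬((k : ℕ) < i))).card : ℕ) : ℝ)
      = (n : ℝ) - (i : ℝ) := by
    rw [card_filter_not_lt (le_of_lt hin)]
    push_cast [Nat.cast_sub (le_of_lt hin)]
    ring
  set K := Finset.univ.filter (fun k : Fin n => ¬((k : ℕ) < i)) with hKdef
  set a : Fin n := ⟨i, hin⟩ with hadef
  have hfix : ∀ k ∈ K, ∀ x : Fin n, (x : ℕ) < i → (τ * Equiv.swap a k) x = τ x := by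
    intro k hk x hx
    have hk' : ¬((k : ℕ) < i) := by
      have := Finset.mem_filter.mp hk; exact this.2
    have hxa : x ≠ a := by
      intro h; rw [h] at hx; simp [hadef] at hx
    have hxk : x ≠ k := by
      intro h; rw [h] at hx; omega
    simp [Equiv.Perm.mul_apply, Equiv.swap_apply_of_ne_of_ne hxa hxk]
  have hMpre : ∀ k ∈ K, ∀ j, j ≤ i → Mrt c (τ * Equiv.swap a k) j = Mrt c τ j := by
    intro k hk j hj
    exact Mrt_prefix c (fun x hx => hfix k hk x (lt_of_lt_of_le hx hj))
  by_cases hex : ∃ j, j ≤ i ∧ Mrt c τ j ≤ -t / (n : ℝ)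
  · -- already stopped: all terms equal
    have hYk : ∀ k ∈ K, Yf c lam (8 * Qr / (n : ℝ) ^ 3) t (τ * Equiv.swap a k) (i + 1)
        = Yf c lam (8 * Qr / (n : ℝ) ^ 3) t τ i := by
      intro k hk
      have hiff : ∀ j, j ≤ i →
          ((Mrt c (τ * Equiv.swap a k) j ≤ -t / (n : ℝ)) ↔ (Mrt c τ j ≤ -t / (n : ℝ))) := by
        intro j hj; rw [hMpre k hk j hj]
      have hexk : ∃ j, j ≤ i ∧ Mrt c (τ * Equiv.swap a k) j ≤ -t / (n : ℝ) := by
        obtain ⟨j, hj, hh⟩ := hex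
        exact ⟨j, hj, (hiff j hj).mpr hh⟩
      unfold Yf
      rw [stI_succ_of_exists hexk,
        stI_congr (P := fun j => Mrt c (τ * Equiv.swap a k) j ≤ -t / (n : ℝ))
          (Q := fun j => Mrt c τ j ≤ -t / (n : ℝ)) hiff]
      unfold Zf
      rw [hMpre k hk _ (stI_le _ i)]
    rw [Finset.sum_congr rfl hYk, Finset.sum_const, nsmul_eq_mul]
  · -- not stopped: genuine martingale step
    obtain ⟨Sr, hSr⟩ : ∃ x : ℝ, (pS (c ∘ ⇑τ) i : ℝ) = x := ⟨_, rfl⟩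
    have hMi : Mrt c τ i = (Sr + 1) / ((n : ℝ) - (i : ℝ)) := by
      unfold Mrt; rw [hSr]
    have hSrlb : -(i : ℝ) ≤ Sr := by
      rw [← hSr]
      have h := neg_le_pS (c ∘ ⇑τ) i (le_of_lt hin)
      exact_mod_cast h
    -- total sum of values
    have htot : ∑ x : Fin n, (c (τ x) : ℝ) = (n : ℝ) - 1 := by
      rw [Equiv.sum_comp τ (fun x => (c x : ℝ)), ← Nat.cast_sum, hc,
        Nat.cast_sub (by omega : 1 ≤ n)]
      simp
    -- prefix sum
    have hpre : ∑ x : Fin n, (if (x : ℕ) < i then (c (τ x) : ℝ) else 0) = Sr + (i : ℝ) := by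
      have h := pS_real (c ∘ ⇑τ) i (le_of_lt hin)
      rw [hSr] at h
      have : ∑ x : Fin n, (if (x : ℕ) < i then ((c ∘ ⇑τ) x : ℝ) else 0) = Sr + (i : ℝ) := by
        linarith
      simpa using this
    -- sum over K
    have hsplitK : ∑ k ∈ K, (c (τ k) : ℝ) = ((n : ℝ) - (i : ℝ) - 1) - Sr := by
      have h := Finset.sum_filter_add_sum_filter_not Finset.univ
        (fun x : Fin n => (x : ℕ) < i) (fun x => (c (τ x) : ℝ))
      rw [htot] at h
      have h2 : ∑ x ∈ Finset.univ.filter (fun x : Fin n => (x : ℕ) < i), (c (τ x) : ℝ)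
          = Sr + (i : ℝ) := by
        rw [Finset.sum_filter]; exact hpre
      rw [h2] at h
      have : ∑ x ∈ K, (c (τ x) : ℝ) = ((n:ℝ) - 1) - (Sr + i) := by linarith
      rw [this]; ring
    have hsq : ∑ k ∈ K, ((c (τ k) : ℝ)) ^ 2 ≤ Qr := by
      rw [hQr, ← Equiv.sum_comp τ (fun x => ((c x : ℝ)) ^ 2)]
      exact Finset.sum_le_sum_of_subset_of_nonneg (Finset.filter_subset _ _)
        (fun x _ _ => by positivity)
    -- the increments
    set X : Fin n → ℝ := fun k =>
      (Sr + 1) / ((n : ℝ) - (i : ℝ)) - (Sr + (c (τ k) : ℝ)) / ((n : ℝ) - (i : ℝ) - 1) with hXdef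
    have hX0 : ∑ k ∈ K, X k = 0 := by
      have hXeq : ∀ k ∈ K, X k =
          ((Sr + 1) / ((n : ℝ) - (i : ℝ)) - Sr / ((n : ℝ) - (i : ℝ) - 1))
            - (c (τ k) : ℝ) / ((n : ℝ) - (i : ℝ) - 1) := by
        intro k _; simp only [hXdef]; ring
      rw [Finset.sum_congr rfl hXeq, Finset.sum_sub_distrib, Finset.sum_const,
        ← Finset.sum_div, hsplitK, nsmul_eq_mul, hcardK]
      field_simp
      ring
    have hX2 : ∑ k ∈ K, (X k) ^ 2 ≤ Qr / ((n : ℝ) - (i : ℝ) - 1) ^ 2 := by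
      have hXeq : ∀ k ∈ K, (X k) ^ 2 =
          ((Sr + 1) / ((n : ℝ) - (i : ℝ)) - Sr / ((n : ℝ) - (i : ℝ) - 1)) ^ 2
          - 2 * ((Sr + 1) / ((n : ℝ) - (i : ℝ)) - Sr / ((n : ℝ) - (i : ℝ) - 1))
              * ((c (τ k) : ℝ) / ((n : ℝ) - (i : ℝ) - 1))
          + ((c (τ k) : ℝ) / ((n : ℝ) - (i : ℝ) - 1)) ^ 2 := by
        intro k _; simp only [hXdef]; ring
      have hsq2 : ∑ k ∈ K, ((c (τ k) : ℝ) / ((n : ℝ) - (i : ℝ) - 1)) ^ 2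
          = (∑ k ∈ K, ((c (τ k) : ℝ)) ^ 2) / ((n : ℝ) - (i : ℝ) - 1) ^ 2 := by
        simp [div_pow, ← Finset.sum_div]
      rw [Finset.sum_congr rfl hXeq]
      rw [Finset.sum_add_distrib, Finset.sum_sub_distrib, Finset.sum_const, nsmul_eq_mul,
        hcardK, ← Finset.mul_sum, ← Finset.sum_div, hsplitK, hsq2]
      have hd2 : 0 ≤ ((Sr + 1) / ((n : ℝ) - (i : ℝ)) - Sr / ((n : ℝ) - (i : ℝ) - 1)) ^ 2 :=
        sq_nonneg _
      have hkey : ((n : ℝ) - (i : ℝ)) * ((Sr + 1) / ((n : ℝ) - (i : ℝ)) - Sr / ((n : ℝ) - (i : ℝ) - 1)) ^ 2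
          - 2 * ((Sr + 1) / ((n : ℝ) - (i : ℝ)) - Sr / ((n : ℝ) - (i : ℝ) - 1))
            * ((((n : ℝ) - (i : ℝ) - 1) - Sr) / ((n : ℝ) - (i : ℝ) - 1))
          = -(((n : ℝ) - (i : ℝ)) * ((Sr + 1) / ((n : ℝ) - (i : ℝ)) - Sr / ((n : ℝ) - (i : ℝ) - 1)) ^ 2) := by
        field_simp
        ring
      have hsqd : (∑ k ∈ K, ((c (τ k) : ℝ)) ^ 2) / ((n : ℝ) - (i : ℝ) - 1) ^ 2
          ≤ Qr / ((n : ℝ) - (i : ℝ) - 1) ^ 2 := by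
        apply div_le_div_of_nonneg_right hsq
        positivity
      have hdd : 0 ≤ ((n : ℝ) - (i : ℝ)) * ((Sr + 1) / ((n : ℝ) - (i : ℝ)) - Sr / ((n : ℝ) - (i : ℝ) - 1)) ^ 2 := by positivity
      linarith [hkey, hsqd, hdd]
    -- jump bound
    have hX4 : ∀ k ∈ K, X k ≤ 4 / (n : ℝ) := by
      intro k hk
      have he : (0 : ℝ) ≤ (c (τ k) : ℝ) := by positivity
      have hXv : X k = ((((n : ℝ) - (i : ℝ) - 1) - Sr) - (c (τ k) : ℝ) * ((n : ℝ) - (i : ℝ)))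
          / (((n : ℝ) - (i : ℝ)) * ((n : ℝ) - (i : ℝ) - 1)) := by
        simp only [hXdef]
        field_simp
        ring
      rw [hXv, div_le_div_iff₀ (by positivity) (by linarith : (0 : ℝ) < (n : ℝ))]
      have hp : ((n : ℝ) / 2) * ((n : ℝ) / 2) ≤ ((n : ℝ) - (i : ℝ)) * ((n : ℝ) - (i : ℝ) - 1) :=
        mul_le_mul (by linarith) (by linarith) (by linarith) (by linarith)
      nlinarith [hp, mul_nonneg (mul_nonneg he (le_of_lt hNIpos)) (by linarith : (0:ℝ) ≤ (n:ℝ)),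
        mul_le_mul_of_nonneg_right hSrlb (by linarith : (0:ℝ) ≤ (n:ℝ))]
    have hXb : ∀ k ∈ K, lam * X k ≤ 1 := by
      intro k hk
      calc lam * X k ≤ lam * (4 / (n : ℝ)) := mul_le_mul_of_nonneg_left (hX4 k hk) hlam
        _ ≤ 1 := hlam4
    -- variance vs beta
    have hB : Qr / ((n : ℝ) - (i : ℝ) - 1) ^ 2 ≤ ((K.card : ℕ) : ℝ) * (8 * Qr / (n : ℝ) ^ 3) := by
      rw [hcardK]
      have hp3 : ((n : ℝ) / 2) * (((n : ℝ) / 2) * ((n : ℝ) / 2))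
          ≤ ((n : ℝ) - (i : ℝ)) * (((n : ℝ) - (i : ℝ) - 1) * ((n : ℝ) - (i : ℝ) - 1)) := by
        apply mul_le_mul (by linarith) _ (by positivity) (by linarith)
        apply mul_le_mul hD1 hD1 (by linarith) (by linarith)
      have h8 : (n : ℝ) ^ 3 ≤ 8 * (((n : ℝ) - (i : ℝ)) * ((n : ℝ) - (i : ℝ) - 1) ^ 2) := by
        nlinarith [hp3]
      have hrw : ((n : ℝ) - (i : ℝ)) * (8 * Qr / (n : ℝ) ^ 3)
          = (8 * Qr * ((n : ℝ) - (i : ℝ))) / (n : ℝ) ^ 3 := by ring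
      rw [hrw, div_le_div_iff₀ (by positivity) (by positivity)]
      nlinarith [mul_le_mul_of_nonneg_left h8 (le_of_lt hQpos)]
    have hbeta0 : (0 : ℝ) ≤ 8 * Qr / (n : ℝ) ^ 3 := by positivity
    have hbern := bern_sum hX0 hXb hX2 hB hbeta0
    -- martingale increment identity
    have hMk : ∀ k ∈ K, Mrt c (τ * Equiv.swap a k) (i + 1)
        = (Sr + (c (τ k) : ℝ)) / ((n : ℝ) - (i : ℝ) - 1) := by
      intro k hk
      unfold Mrt
      have h2 : pS (c ∘ ⇑(τ * Equiv.swap a k)) i = pS (c ∘ ⇑τ) i :=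
        pS_congr (fun x hx => by
          simp only [Function.comp_apply]; rw [hfix k hk x hx])
      have h1 := pS_succ (c ∘ ⇑(τ * Equiv.swap a k)) i hin
      have h3 : ((c ∘ ⇑(τ * Equiv.swap a k)) ⟨i, hin⟩ : ℤ) = (c (τ k) : ℤ) := by
        simp only [Function.comp_apply]
        norm_cast
        congr 1
        show (τ * Equiv.swap a k) a = τ k
        simp [Equiv.Perm.mul_apply, Equiv.swap_apply_left]
      rw [h1, h3, h2]
      push_cast
      rw [hSr]
      congr 1 <;> ring
    have hnexk : ∀ k ∈ K, ¬∃ j, j ≤ i ∧ Mrt c (τ * Equiv.swap a k) j ≤ -t / (n : ℝ) := by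
      intro k hk h
      obtain ⟨j, hj, hbad⟩ := h
      exact hex ⟨j, hj, by rwa [hMpre k hk j hj] at hbad⟩
    have hYi : Yf c lam (8 * Qr / (n : ℝ) ^ 3) t τ i = Zf c lam (8 * Qr / (n : ℝ) ^ 3) τ i := by
      unfold Yf; rw [stI_of_not_exists hex]
    have hYk' : ∀ k ∈ K, Yf c lam (8 * Qr / (n : ℝ) ^ 3) t (τ * Equiv.swap a k) (i + 1)
        = Real.exp (lam * X k) * (Zf c lam (8 * Qr / (n : ℝ) ^ 3) τ i
            * Real.exp (-(lam ^ 2 * (8 * Qr / (n : ℝ) ^ 3)))) := by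
      intro k hk
      unfold Yf
      rw [stI_succ_of_not_exists (hnexk k hk)]
      unfold Zf
      rw [hMk k hk, hMi]
      rw [← Real.exp_add, ← Real.exp_add]
      congr 1
      push_cast
      simp only [hXdef]
      ring
    calc ∑ k ∈ K, Yf c lam (8 * Qr / (n : ℝ) ^ 3) t (τ * Equiv.swap a k) (i + 1)
        = ∑ k ∈ K, Real.exp (lam * X k) * (Zf c lam (8 * Qr / (n : ℝ) ^ 3) τ i
            * Real.exp (-(lam ^ 2 * (8 * Qr / (n : ℝ) ^ 3)))) := Finset.sum_congr rfl hYk'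
      _ = (∑ k ∈ K, Real.exp (lam * X k)) * (Zf c lam (8 * Qr / (n : ℝ) ^ 3) τ i
            * Real.exp (-(lam ^ 2 * (8 * Qr / (n : ℝ) ^ 3)))) := by
          rw [← Finset.sum_mul]
      _ ≤ (((K.card : ℕ) : ℝ) * Real.exp (lam ^ 2 * (8 * Qr / (n : ℝ) ^ 3)))
            * (Zf c lam (8 * Qr / (n : ℝ) ^ 3) τ i
            * Real.exp (-(lam ^ 2 * (8 * Qr / (n : ℝ) ^ 3)))) := by
          apply mul_le_mul_of_nonneg_right hbern
          exact mul_nonneg (Zf_pos c _ _ τ i).le (Real.exp_pos _).le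
      _ = ((K.card : ℕ) : ℝ) * Zf c lam (8 * Qr / (n : ℝ) ^ 3) τ i := by
          rw [show (((K.card : ℕ) : ℝ) * Real.exp (lam ^ 2 * (8 * Qr / (n : ℝ) ^ 3)))
              * (Zf c lam (8 * Qr / (n : ℝ) ^ 3) τ i
                * Real.exp (-(lam ^ 2 * (8 * Qr / (n : ℝ) ^ 3))))
              = (((K.card : ℕ) : ℝ) * Zf c lam (8 * Qr / (n : ℝ) ^ 3) τ i)
                * (Real.exp (lam ^ 2 * (8 * Qr / (n : ℝ) ^ 3))
                  * Real.exp (-(lam ^ 2 * (8 * Qr / (n : ℝ) ^ 3)))) from by ring,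
            ← Real.exp_add]
          norm_num
      _ = ((K.card : ℕ) : ℝ) * Yf c lam (8 * Qr / (n : ℝ) ^ 3) t τ i := by rw [hYi]

lemma step_sum {n : ℕ} (c : Fin n → ℕ) (hc : ∑ x, c x = n - 1)
    {t lam Qr : ℝ} (ht : 0 ≤ t) (hlam : 0 ≤ lam)
    (hQr : Qr = ∑ x : Fin n, ((c x : ℝ)) ^ 2) (hQpos : 0 < Qr)
    (hlam4 : lam * (4 / (n : ℝ)) ≤ 1)
    {i : ℕ} (hi2 : i < n / 2) :
    ∑ τ : Equiv.Perm (Fin n), Yf c lam (8 * Qr / (n : ℝ) ^ 3) t τ (i + 1)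
      ≤ ∑ τ : Equiv.Perm (Fin n), Yf c lam (8 * Qr / (n : ℝ) ^ 3) t τ i := by
  classical
  have hin : i < n := lt_of_lt_of_le hi2 (Nat.div_le_self n 2)
  set K := Finset.univ.filter (fun k : Fin n => ¬((k : ℕ) < i)) with hKdef
  have hcard_pos : 0 < K.card := by
    rw [hKdef, card_filter_not_lt (le_of_lt hin)]; omega
  have hper : ∀ k ∈ K, ∑ τ : Equiv.Perm (Fin n),
      Yf c lam (8 * Qr / (n : ℝ) ^ 3) t (τ * Equiv.swap ⟨i, hin⟩ k) (i + 1)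
      = ∑ τ : Equiv.Perm (Fin n), Yf c lam (8 * Qr / (n : ℝ) ^ 3) t τ (i + 1) := by
    intro k _
    exact Equiv.sum_comp (Equiv.mulRight (Equiv.swap ⟨i, hin⟩ k))
      (fun τ => Yf c lam (8 * Qr / (n : ℝ) ^ 3) t τ (i + 1))
  have master : ((K.card : ℕ) : ℝ) * ∑ τ : Equiv.Perm (Fin n),
      Yf c lam (8 * Qr / (n : ℝ) ^ 3) t τ (i + 1)
      = ∑ τ : Equiv.Perm (Fin n), ∑ k ∈ K,
        Yf c lam (8 * Qr / (n : ℝ) ^ 3) t (τ * Equiv.swap ⟨i, hin⟩ k) (i + 1) := by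
    rw [Finset.sum_comm]
    rw [Finset.sum_congr rfl hper, Finset.sum_const, nsmul_eq_mul]
  have keyr : ∑ τ : Equiv.Perm (Fin n), ∑ k ∈ K,
      Yf c lam (8 * Qr / (n : ℝ) ^ 3) t (τ * Equiv.swap ⟨i, hin⟩ k) (i + 1)
      ≤ ∑ τ : Equiv.Perm (Fin n), ((K.card : ℕ) : ℝ)
          * Yf c lam (8 * Qr / (n : ℝ) ^ 3) t τ i :=
    Finset.sum_le_sum (fun τ _ => step_pointwise c hc ht hlam hQr hQpos hlam4 hi2 hin τ)
  rw [← Finset.mul_sum] at keyr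
  rw [← master] at keyr
  have hcpos : (0 : ℝ) < ((K.card : ℕ) : ℝ) := by exact_mod_cast hcard_pos
  exact le_of_mul_le_mul_left keyr hcpos

lemma chain_sum {n : ℕ} (c : Fin n → ℕ) (hc : ∑ x, c x = n - 1)
    {t lam Qr : ℝ} (ht : 0 ≤ t) (hlam : 0 ≤ lam)
    (hQr : Qr = ∑ x : Fin n, ((c x : ℝ)) ^ 2) (hQpos : 0 < Qr)
    (hlam4 : lam * (4 / (n : ℝ)) ≤ 1) :
    ∀ j, j ≤ n / 2 →
      ∑ τ : Equiv.Perm (Fin n), Yf c lam (8 * Qr / (n : ℝ) ^ 3) t τ j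
        ≤ ∑ τ : Equiv.Perm (Fin n), Yf c lam (8 * Qr / (n : ℝ) ^ 3) t τ 0 := by
  intro j
  induction j with
  | zero => exact fun _ => le_refl _
  | succ j ih =>
    intro hj
    exact le_trans (step_sum c hc ht hlam hQr hQpos hlam4 (by omega)) (ih (by omega))

/-- Sub-Gaussian bound on the minimum of the first half of the partial-sum walk
of a uniformly random rearrangement of a child sequence `c`: with
`a = (∑ c_i²)/n`, for all `t ≥ 0`,
`P(min_{0 ≤ i ≤ ⌊n/2⌋} S_i ≤ -(t+1)) ≤ exp(-t²/(8(3+2a)n + 8t/3))`. -/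
theorem stmt8 {n : ℕ} (hn : 0 < n) (c : Fin n → ℕ) (hc : ∑ i, c i = n - 1)
    (a : ℝ) (ha : a = (∑ i, (c i : ℝ) ^ 2) / n) (t : ℝ) (ht : 0 ≤ t) :
    (({τ : Equiv.Perm (Fin n) |
        ∃ i ≤ n / 2, (pS (c ∘ τ) i : ℝ) ≤ -(t + 1)}.ncard : ℝ) / (Nat.factorial n)
      ≤ Real.exp (-(t ^ 2) / (8 * (3 + 2 * a) * n + 8 * t / 3))) := by
  classical
  set E := {τ : Equiv.Perm (Fin n) | ∃ i ≤ n / 2, (pS (c ∘ τ) i : ℝ) ≤ -(t + 1)} with hE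
  by_cases hne : E.Nonempty
  case neg =>
    rw [Set.not_nonempty_iff_eq_empty] at hne
    rw [hne]
    simp [Set.ncard_empty]
    positivity
  case pos =>
    obtain ⟨τ0, hτ0⟩ := hne
    rw [hE, Set.mem_setOf_eq] at hτ0
    obtain ⟨i0, hi0, hval⟩ := hτ0
    have hi0n : i0 ≤ n := le_trans hi0 (Nat.div_le_self n 2)
    have hlb0 : -(i0 : ℝ) ≤ ((pS (c ∘ ⇑τ0) i0 : ℤ) : ℝ) := by
      exact_mod_cast neg_le_pS (c ∘ ⇑τ0) i0 hi0n
    have hti0 : t + 1 ≤ (i0 : ℝ) := by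
      have h := hval
      push_cast at h ⊢
      linarith
    have hm1 : 1 ≤ n / 2 := by
      by_contra h
      have h0 : n / 2 = 0 := by omega
      rw [h0] at hi0
      interval_cases i0
      simp at hti0
      linarith
    have hn2 : 2 ≤ n := by omega
    have hN2 : (2 : ℝ) ≤ (n : ℝ) := by exact_mod_cast hn2
    set Qr : ℝ := ∑ x : Fin n, ((c x : ℝ)) ^ 2 with hQrdef
    have hQrn1 : (n : ℝ) - 1 ≤ Qr := by
      have h1 : ((n - 1 : ℕ) : ℝ) = ∑ x : Fin n, (c x : ℝ) := by
        rw [← hc]; push_cast; rfl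
      have h2 : (n : ℝ) - 1 = ((n - 1 : ℕ) : ℝ) := by
        rw [Nat.cast_sub (by omega : 1 ≤ n)]; simp
      rw [h2, h1, hQrdef]
      apply Finset.sum_le_sum
      intro x _
      have hx : (c x : ℕ) ≤ (c x) ^ 2 := by nlinarith [Nat.zero_le (c x)]
      exact_mod_cast hx
    have hQpos : 0 < Qr := by linarith
    set lam : ℝ := t * (n : ℝ) / (8 * Qr) with hlam_def
    have hlam : 0 ≤ lam := by positivity
    have htm : t ≤ (n : ℝ) / 2 - 1 := by
      have h1 : (i0 : ℝ) ≤ ((n / 2 : ℕ) : ℝ) := by exact_mod_cast hi0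
      have h2 : ((n / 2 : ℕ) : ℝ) ≤ (n : ℝ) / 2 := Nat.cast_div_le
      linarith
    have hlam4 : lam * (4 / (n : ℝ)) ≤ 1 := by
      rw [hlam_def, div_mul_div_comm, div_le_one (by positivity)]
      nlinarith
    set m := n / 2 with hm_def
    have hchain := chain_sum c hc ht hlam hQrdef hQpos hlam4 m (le_refl m)
    have hY0 : ∀ τ : Equiv.Perm (Fin n), Yf c lam (8 * Qr / (n : ℝ) ^ 3) t τ 0 ≤ 1 := by
      intro τ
      unfold Yf
      rw [stI_zero]
      unfold Zf
      rw [Real.exp_le_one_iff]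
      have hM0 : Mrt c τ 0 = 1 / (n : ℝ) := by
        unfold Mrt; rw [pS_zero]; norm_num
      rw [hM0]
      have h1 : 0 ≤ lam * ((n : ℝ))⁻¹ := by positivity
      simp
      linarith
    have hbase : ∑ τ : Equiv.Perm (Fin n), Yf c lam (8 * Qr / (n : ℝ) ^ 3) t τ 0
        ≤ (Nat.factorial n : ℝ) := by
      calc ∑ τ : Equiv.Perm (Fin n), Yf c lam (8 * Qr / (n : ℝ) ^ 3) t τ 0
          ≤ ∑ _τ : Equiv.Perm (Fin n), (1 : ℝ) := Finset.sum_le_sum (fun τ _ => hY0 τ)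
        _ = (Fintype.card (Equiv.Perm (Fin n)) : ℝ) := by
            rw [Finset.sum_const, nsmul_eq_mul, mul_one]; rfl
        _ = (Nat.factorial n : ℝ) := by rw [Fintype.card_perm, Fintype.card_fin]
    set r : ℝ := Real.exp (lam * (t / (n : ℝ)) - lam ^ 2 * (8 * Qr / (n : ℝ) ^ 3) * (m : ℝ))
      with hr_def
    have hev : ∀ τ ∈ E, r ≤ Yf c lam (8 * Qr / (n : ℝ) ^ 3) t τ m := by
      intro τ hτ
      rw [hE, Set.mem_setOf_eq] at hτ
      obtain ⟨i, hi, hvali⟩ := hτ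
      have hiln : i < n := lt_of_le_of_lt hi (Nat.div_lt_self (by omega) one_lt_two)
      have hNIpos : (0 : ℝ) < (n : ℝ) - (i : ℝ) := by
        have h := (Nat.cast_lt (α := ℝ)).mpr hiln
        linarith
      have hMi : Mrt c τ i ≤ -t / (n : ℝ) := by
        unfold Mrt
        have h1 : ((pS (c ∘ ⇑τ) i : ℤ) : ℝ) + 1 ≤ -t := by push_cast at hvali ⊢; linarith
        rw [div_le_div_iff₀ hNIpos (by linarith : (0:ℝ) < (n:ℝ))]
        have h2 := mul_le_mul_of_nonneg_right h1 (by linarith : (0:ℝ) ≤ (n:ℝ))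
        have h3 : 0 ≤ t * (i : ℝ) := mul_nonneg ht (by positivity)
        nlinarith
      have hexm : ∃ j, j ≤ m ∧ Mrt c τ j ≤ -t / (n : ℝ) := ⟨i, hi, hMi⟩
      unfold Yf Zf
      rw [hr_def, Real.exp_le_exp]
      have hsm : stI (fun j => Mrt c τ j ≤ -t / (n : ℝ)) m ≤ m := stI_le _ _
      have hsP : Mrt c τ (stI (fun j => Mrt c τ j ≤ -t / (n : ℝ)) m) ≤ -t / (n : ℝ) :=
        stI_spec hexm
      have h1 : lam * Mrt c τ (stI (fun j => Mrt c τ j ≤ -t / (n : ℝ)) m)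
          ≤ lam * (-t / (n : ℝ)) := mul_le_mul_of_nonneg_left hsP hlam
      have h2 : lam ^ 2 * (8 * Qr / (n : ℝ) ^ 3)
            * ((stI (fun j => Mrt c τ j ≤ -t / (n : ℝ)) m : ℕ) : ℝ)
          ≤ lam ^ 2 * (8 * Qr / (n : ℝ) ^ 3) * (m : ℝ) := by
        apply mul_le_mul_of_nonneg_left _ (by positivity)
        exact_mod_cast hsm
      have h3 : lam * (-t / (n : ℝ)) = -(lam * (t / (n : ℝ))) := by ring
      linarith
    have hEfin : E.Finite := Set.toFinite E
    have hcount : (E.ncard : ℝ) * r ≤ (Nat.factorial n : ℝ) := by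
      have hEcard : (E.ncard : ℝ) = (hEfin.toFinset.card : ℝ) := by
        rw [Set.ncard_eq_toFinset_card E hEfin]
      calc (E.ncard : ℝ) * r = ∑ _τ ∈ hEfin.toFinset, r := by
            rw [Finset.sum_const, nsmul_eq_mul, hEcard]
        _ ≤ ∑ τ ∈ hEfin.toFinset, Yf c lam (8 * Qr / (n : ℝ) ^ 3) t τ m :=
            Finset.sum_le_sum (fun τ hτ => hev τ ((Set.Finite.mem_toFinset hEfin).mp hτ))
        _ ≤ ∑ τ : Equiv.Perm (Fin n), Yf c lam (8 * Qr / (n : ℝ) ^ 3) t τ m :=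
            Finset.sum_le_sum_of_subset_of_nonneg (Finset.subset_univ _)
              (fun τ _ _ => (Yf_pos c lam _ t τ m).le)
        _ ≤ ∑ τ : Equiv.Perm (Fin n), Yf c lam (8 * Qr / (n : ℝ) ^ 3) t τ 0 := hchain
        _ ≤ (Nat.factorial n : ℝ) := hbase
    have hrpos : 0 < r := Real.exp_pos _
    have hfac_pos : (0 : ℝ) < (Nat.factorial n : ℝ) := by
      exact_mod_cast Nat.factorial_pos n
    have hdivr : (E.ncard : ℝ) / (Nat.factorial n : ℝ) ≤ 1 / r := by
      rw [div_le_div_iff₀ hfac_pos hrpos, one_mul]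
      exact hcount
    have hr1 : 1 / r = Real.exp (-(lam * (t / (n : ℝ))
        - lam ^ 2 * (8 * Qr / (n : ℝ) ^ 3) * (m : ℝ))) := by
      rw [one_div, hr_def, ← Real.exp_neg]
    have hQa : a * (n : ℝ) = Qr := by
      rw [ha, hQrdef]
      field_simp
    have hargs : -(lam * (t / (n : ℝ)) - lam ^ 2 * (8 * Qr / (n : ℝ) ^ 3) * (m : ℝ))
        ≤ -(t ^ 2) / (8 * (3 + 2 * a) * (n : ℝ) + 8 * t / 3) := by
      have h1 : lam * (t / (n : ℝ)) = t ^ 2 / (8 * Qr) := by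
        rw [hlam_def]; field_simp
      have h2 : lam ^ 2 * (8 * Qr / (n : ℝ) ^ 3) * (m : ℝ) ≤ t ^ 2 / (16 * Qr) := by
        have hm2 : (m : ℝ) ≤ (n : ℝ) / 2 := Nat.cast_div_le
        have hm0 : (0 : ℝ) ≤ (m : ℝ) := by positivity
        rw [hlam_def]
        have expand : (t * (n : ℝ) / (8 * Qr)) ^ 2 * (8 * Qr / (n : ℝ) ^ 3) * (m : ℝ)
            = t ^ 2 * (m : ℝ) / (8 * Qr * (n : ℝ)) := by
          field_simp
        rw [expand, div_le_div_iff₀ (by positivity) (by positivity)]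
        nlinarith [mul_nonneg (mul_nonneg (sq_nonneg t) hQpos.le)
          (by linarith : (0:ℝ) ≤ 8 * (n:ℝ) - 16 * (m:ℝ))]
      have hden : 16 * Qr ≤ 8 * (3 + 2 * a) * (n : ℝ) + 8 * t / 3 := by
        nlinarith [hQa]
      have h3 : t ^ 2 / (8 * (3 + 2 * a) * (n : ℝ) + 8 * t / 3) ≤ t ^ 2 / (16 * Qr) := by
        apply div_le_div_of_nonneg_left (sq_nonneg t) (by positivity) hden
      have h4 : t ^ 2 / (8 * Qr) - t ^ 2 / (16 * Qr) = t ^ 2 / (16 * Qr) := by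
        field_simp
        ring
      rw [neg_div]
      linarith
    calc (E.ncard : ℝ) / (Nat.factorial n : ℝ) ≤ 1 / r := hdivr
      _ = Real.exp (-(lam * (t / (n : ℝ)) - lam ^ 2 * (8 * Qr / (n : ℝ) ^ 3) * (m : ℝ))) := hr1
      _ ≤ Real.exp (-(t ^ 2) / (8 * (3 + 2 * a) * (n : ℝ) + 8 * t / 3)) :=
          Real.exp_le_exp.mpr hargs
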